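/- Let (X, Y) be a random vector with X valued in [0,1]^d and Y real-valued and square-integrable, let (Θ_k)_{k ≥ 1} be a sequence of independent, identically distributed ℝ^q-valued random vectors independent of (X, Y), and let T : [0,1]^d × ℝ^q → ℝ be a measurable function with E[T(X, Θ_1)²] < ∞. Define H_B(X) = (1/B) Σ_{k=1}^B T(X, Θ_k). Then lim_{B → ∞} E[(Y − H_B(X))²] = E[(Y − E[T(X, Θ_1) | X])²]. -/

import Mathlib

open MeasureTheory ProbabilityTheory Filter

lemma l2_mul_integrable {α : Type*} [MeasurableSpace α] {μ : Measure α}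
    {f g : α → ℝ} (hf : MemLp f 2 μ) (hg : MemLp g 2 μ) :
    Integrable (fun ω => f ω * g ω) μ := by
  have h := hg.smul (φ := f) (p := 2) (q := 2) (r := 1) hf
  rw [← memLp_one_iff_integrable]
  exact h

lemma l2_norm_sq {α : Type*} [MeasurableSpace α] {μ : Measure α}
    (v : Lp ℝ 2 μ) : ‖v‖ ^ 2 = ∫ ω, v ω * v ω ∂μ := by
  rw [← real_inner_self_eq_norm_sq, L2.inner_def]
  congr 1


/-- Breiman's random forest limit: let `(X, Y)` be a random vector with `X` valued in
`[0,1]^d` and `Y` square integrable, `(Θ_k)` i.i.d. and independent of `(X, Y)`, and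
`T : [0,1]^d × ℝ^q → ℝ` measurable with `E[T(X, Θ_1)²] < ∞`.  With
`H_B(X) = (1/B) Σ_{k=1}^B T(X, Θ_k)`, one has
`lim_{B → ∞} E[(Y − H_B(X))²] = E[(Y − E[T(X, Θ_1) | X])²]`. -/
theorem tendsto_forest_L2_error {Ω : Type*} [MeasurableSpace Ω]
    (μ : Measure Ω) [IsProbabilityMeasure μ]
    {d q : ℕ} (X : Ω → (Fin d → ℝ)) (Y : Ω → ℝ) (Θ : ℕ → Ω → (Fin q → ℝ))
    (hX : Measurable X) (hXval : ∀ ω, X ω ∈ Set.Icc (0 : Fin d → ℝ) 1)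
    (hY : MemLp Y 2 μ)
    (hΘmeas : ∀ k, Measurable (Θ k))
    (hΘindep : iIndepFun Θ μ)
    (hΘident : ∀ k, Measure.map (Θ k) μ = Measure.map (Θ 0) μ)
    (hindep : IndepFun (fun ω k => Θ k ω) (fun ω => (X ω, Y ω)) μ)
    (T : (Fin d → ℝ) → (Fin q → ℝ) → ℝ)
    (hT : Measurable fun p : (Fin d → ℝ) × (Fin q → ℝ) => T p.1 p.2)
    (hTsq : MemLp (fun ω => T (X ω) (Θ 0 ω)) 2 μ) :
    Tendsto (fun B : ℕ => ∫ ω, (Y ω - (B : ℝ)⁻¹ * ∑ k ∈ Finset.range B, T (X ω) (Θ k ω)) ^ 2 ∂μ)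
      atTop
      (nhds (∫ ω,
        (Y ω - (μ[fun ω' => T (X ω') (Θ 0 ω')|MeasurableSpace.comap X inferInstance]) ω) ^ 2 ∂μ)) := by
  classical
  set ν : Measure (Fin q → ℝ) := μ.map (Θ 0) with hν
  set ρ : Measure (Fin d → ℝ) := μ.map X with hρ
  haveI : IsProbabilityMeasure ν := Measure.isProbabilityMeasure_map (hΘmeas 0).aemeasurable
  haveI : IsProbabilityMeasure ρ := Measure.isProbabilityMeasure_map hX.aemeasurable
  set Tf : (Fin d → ℝ) × (Fin q → ℝ) → ℝ := fun p => T p.1 p.2 with hTfdef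
  have hTf_sm : StronglyMeasurable Tf := hT.stronglyMeasurable
  -- joint laws
  have hlaw : ∀ k, μ.map (fun ω => (X ω, Θ k ω)) = ρ.prod ν := by
    intro k
    have hXΘ : IndepFun X (Θ k) μ :=
      hindep.symm.comp measurable_fst (measurable_pi_apply k)
    rw [(indepFun_iff_map_prod_eq_prod_map_map hX.aemeasurable
      (hΘmeas k).aemeasurable).mp hXΘ, hΘident k]
  have hlaw3 : ∀ j k, j ≠ k →
      μ.map (fun ω => (X ω, (Θ j ω, Θ k ω))) = ρ.prod (ν.prod ν) := by
    intro j k hjk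
    have hpm : Measurable fun ω => (Θ j ω, Θ k ω) := (hΘmeas j).prodMk (hΘmeas k)
    have h1 : IndepFun X (fun ω => (Θ j ω, Θ k ω)) μ :=
      hindep.symm.comp measurable_fst
        ((measurable_pi_apply j).prodMk (measurable_pi_apply k))
    have h2 : μ.map (fun ω => (Θ j ω, Θ k ω)) = ν.prod ν := by
      rw [(indepFun_iff_map_prod_eq_prod_map_map (hΘmeas j).aemeasurable
        (hΘmeas k).aemeasurable).mp (hΘindep.indepFun hjk), hΘident j, hΘident k]
    rw [(indepFun_iff_map_prod_eq_prod_map_map hX.aemeasurable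
      hpm.aemeasurable).mp h1, h2]
  -- L² of Tf on the product space
  have hTfL2 : MemLp Tf 2 (ρ.prod ν) := by
    rw [← hlaw 0]
    exact (memLp_map_measure_iff hTf_sm.aestronglyMeasurable
      (hX.prodMk (hΘmeas 0)).aemeasurable).mpr hTsq
  have hfk : ∀ k, MemLp (fun ω => T (X ω) (Θ k ω)) 2 μ := by
    intro k
    have h := memLp_map_measure_iff hTf_sm.aestronglyMeasurable
      (hX.prodMk (hΘmeas k)).aemeasurable (p := 2) (μ := μ)
    rw [hlaw k] at h
    exact h.mp hTfL2
  have hTf_int : Integrable Tf (ρ.prod ν) := hTfL2.integrable one_le_two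
  -- the regression function
  set φ : (Fin d → ℝ) → ℝ := fun x => ∫ θ, T x θ ∂ν with hφdef
  have hφ_sm : StronglyMeasurable φ := hTf_sm.integral_prod_right'
  have hφ_int : Integrable φ ρ := hTf_int.integral_prod_left
  -- L² of the coordinate factors on the triple product space
  have hmap1 : (ρ.prod (ν.prod ν)).map
      (fun p : (Fin d → ℝ) × ((Fin q → ℝ) × (Fin q → ℝ)) => (p.1, p.2.1)) = ρ.prod ν := by
    have he : (fun p : (Fin d → ℝ) × ((Fin q → ℝ) × (Fin q → ℝ)) => (p.1, p.2.1))
        = Prod.map (id : (Fin d → ℝ) → (Fin d → ℝ)) Prod.fst := rfl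
    rw [he, ← Measure.map_prod_map _ _ measurable_id measurable_fst, Measure.map_id,
      Measure.map_fst_prod]
    simp
  have hmap2 : (ρ.prod (ν.prod ν)).map
      (fun p : (Fin d → ℝ) × ((Fin q → ℝ) × (Fin q → ℝ)) => (p.1, p.2.2)) = ρ.prod ν := by
    have he : (fun p : (Fin d → ℝ) × ((Fin q → ℝ) × (Fin q → ℝ)) => (p.1, p.2.2))
        = Prod.map (id : (Fin d → ℝ) → (Fin d → ℝ)) Prod.snd := rfl
    rw [he, ← Measure.map_prod_map _ _ measurable_id measurable_snd, Measure.map_id,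
      Measure.map_snd_prod]
    simp
  have hG1 : MemLp (fun p : (Fin d → ℝ) × ((Fin q → ℝ) × (Fin q → ℝ)) => T p.1 p.2.1) 2
      (ρ.prod (ν.prod ν)) := by
    have h := memLp_map_measure_iff (μ := ρ.prod (ν.prod ν)) hTf_sm.aestronglyMeasurable
      (f := fun p : (Fin d → ℝ) × ((Fin q → ℝ) × (Fin q → ℝ)) => (p.1, p.2.1))
      (measurable_fst.prodMk measurable_snd.fst).aemeasurable (p := 2)
    rw [hmap1] at h
    exact h.mp hTfL2
  have hG2 : MemLp (fun p : (Fin d → ℝ) × ((Fin q → ℝ) × (Fin q → ℝ)) => T p.1 p.2.2) 2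
      (ρ.prod (ν.prod ν)) := by
    have h := memLp_map_measure_iff (μ := ρ.prod (ν.prod ν)) hTf_sm.aestronglyMeasurable
      (f := fun p : (Fin d → ℝ) × ((Fin q → ℝ) × (Fin q → ℝ)) => (p.1, p.2.2))
      (measurable_fst.prodMk measurable_snd.snd).aemeasurable (p := 2)
    rw [hmap2] at h
    exact h.mp hTfL2
  have hGint : Integrable
      (fun p : (Fin d → ℝ) × ((Fin q → ℝ) × (Fin q → ℝ)) => T p.1 p.2.1 * T p.1 p.2.2)
      (ρ.prod (ν.prod ν)) := l2_mul_integrable hG1 hG2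
  -- φ is L²(ρ)
  have hφ2_int : Integrable (fun x => φ x * φ x) ρ := by
    have h := hGint.integral_prod_left
    refine h.congr (Filter.Eventually.of_forall fun x => ?_)
    exact integral_prod_mul (f := fun θ => T x θ) (g := fun θ => T x θ)
  have hφL2 : MemLp φ 2 ρ := by
    rw [memLp_two_iff_integrable_sq hφ_sm.aestronglyMeasurable]
    simpa [pow_two] using hφ2_int
  -- conditional expectation is φ ∘ X
  have hm : MeasurableSpace.comap X inferInstance ≤ _ := hX.comap_le
  have hφX_sm' : StronglyMeasurable[MeasurableSpace.comap X inferInstance] fun ω => φ (X ω) :=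
    hφ_sm.comp_measurable (measurable_iff_comap_le.mpr le_rfl)
  have hf0_int : Integrable (fun ω => T (X ω) (Θ 0 ω)) μ := (hfk 0).integrable one_le_two
  have hφX_L2 : MemLp (fun ω => φ (X ω)) 2 μ := by
    have h := memLp_map_measure_iff (μ := μ) hφ_sm.aestronglyMeasurable
      hX.aemeasurable (p := 2)
    exact h.mp hφL2
  have hφX_int : Integrable (fun ω => φ (X ω)) μ := hφX_L2.integrable one_le_two
  have hset : ∀ s, MeasurableSet[MeasurableSpace.comap X inferInstance] s →
      ∫ ω in s, φ (X ω) ∂μ = ∫ ω in s, T (X ω) (Θ 0 ω) ∂μ := by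
    rintro s ⟨A, hA, rfl⟩
    have h1 : ∫ ω in X ⁻¹' A, φ (X ω) ∂μ = ∫ x in A, φ x ∂ρ :=
      (setIntegral_map hA hφ_sm.aestronglyMeasurable hX.aemeasurable).symm
    have hpre : X ⁻¹' A = (fun ω => (X ω, Θ 0 ω)) ⁻¹' (A ×ˢ Set.univ) := by
      ext ω; simp
    have h2 : ∫ ω in X ⁻¹' A, T (X ω) (Θ 0 ω) ∂μ
        = ∫ p in A ×ˢ Set.univ, Tf p ∂(ρ.prod ν) := by
      rw [hpre, ← hlaw 0]
      exact (setIntegral_map (hA.prod MeasurableSet.univ) hTf_sm.aestronglyMeasurable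
        (hX.prodMk (hΘmeas 0)).aemeasurable).symm
    have h3 : ∫ p in A ×ˢ Set.univ, Tf p ∂(ρ.prod ν) = ∫ x in A, φ x ∂ρ := by
      rw [setIntegral_prod _ hTf_int.integrableOn]
      simp [Measure.restrict_univ]
      rfl
    rw [h1, h2, h3]
  have hg_ae : (fun ω => φ (X ω)) =ᵐ[μ] μ[(fun ω => T (X ω) (Θ 0 ω))|MeasurableSpace.comap X inferInstance] :=
    ae_eq_condExp_of_forall_setIntegral_eq hm hf0_int
      (fun s _ _ => hφX_int.integrableOn)
      (fun s hs _ => hset s hs)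
      hφX_sm'.aestronglyMeasurable
  -- moment identities
  set A : ℝ := ∫ p, Tf p * Tf p ∂(ρ.prod ν) with hA
  set P : ℝ := ∫ x, φ x * φ x ∂ρ with hP
  have hI2 : ∫ ω, φ (X ω) * φ (X ω) ∂μ = P := by
    rw [hP, hρ]
    exact (integral_map hX.aemeasurable ((hφ_sm.mul hφ_sm).aestronglyMeasurable)).symm
  have hI1 : ∀ k, ∫ ω, T (X ω) (Θ k ω) * T (X ω) (Θ k ω) ∂μ = A := by
    intro k
    rw [hA, ← hlaw k]
    exact (integral_map (hX.prodMk (hΘmeas k)).aemeasurable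
      ((hT.mul hT).aestronglyMeasurable)).symm
  have hφfstL2 : MemLp (fun p : (Fin d → ℝ) × (Fin q → ℝ) => φ p.1) 2 (ρ.prod ν) := by
    have h := memLp_map_measure_iff (μ := ρ.prod ν) hφ_sm.aestronglyMeasurable
      (measurable_fst (α := (Fin d → ℝ)) (β := (Fin q → ℝ))).aemeasurable (p := 2)
    rw [Measure.map_fst_prod] at h
    simp only [measure_univ, one_smul] at h
    exact h.mp hφL2
  have hI3 : ∀ k, ∫ ω, T (X ω) (Θ k ω) * φ (X ω) ∂μ = P := by
    intro k
    have hstep : ∫ ω, T (X ω) (Θ k ω) * φ (X ω) ∂μ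
        = ∫ p, Tf p * φ p.1 ∂(ρ.prod ν) := by
      rw [← hlaw k]
      exact (integral_map (hX.prodMk (hΘmeas k)).aemeasurable
        ((hT.mul (hφ_sm.measurable.comp measurable_fst)).aestronglyMeasurable)).symm
    have hint : Integrable (fun p : (Fin d → ℝ) × (Fin q → ℝ) => Tf p * φ p.1) (ρ.prod ν) :=
      l2_mul_integrable hTfL2 hφfstL2
    rw [hstep, integral_prod _ hint, hP]
    refine integral_congr_ae (Filter.Eventually.of_forall fun x => ?_)
    show ∫ θ, Tf (x, θ) * φ x ∂ν = φ x * φ x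
    rw [integral_mul_const]
  have hG1m : Measurable (fun p : (Fin d → ℝ) × ((Fin q → ℝ) × (Fin q → ℝ)) => T p.1 p.2.1) :=
    hT.comp (measurable_fst.prodMk measurable_snd.fst)
  have hG2m : Measurable (fun p : (Fin d → ℝ) × ((Fin q → ℝ) × (Fin q → ℝ)) => T p.1 p.2.2) :=
    hT.comp (measurable_fst.prodMk measurable_snd.snd)
  have hI4 : ∀ j k, j ≠ k → ∫ ω, T (X ω) (Θ j ω) * T (X ω) (Θ k ω) ∂μ = P := by
    intro j k hjk
    have hstep : ∫ ω, T (X ω) (Θ j ω) * T (X ω) (Θ k ω) ∂μ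
        = ∫ p, T p.1 p.2.1 * T p.1 p.2.2 ∂(ρ.prod (ν.prod ν)) := by
      rw [← hlaw3 j k hjk]
      exact (integral_map (hX.prodMk ((hΘmeas j).prodMk (hΘmeas k))).aemeasurable
        ((hG1m.mul hG2m).aestronglyMeasurable)).symm
    rw [hstep, integral_prod _ hGint, hP]
    refine integral_congr_ae (Filter.Eventually.of_forall fun x => ?_)
    show ∫ z, T x z.1 * T x z.2 ∂(ν.prod ν) = φ x * φ x
    exact integral_prod_mul (f := fun θ => T x θ) (g := fun θ => T x θ)
  -- centered variables and orthogonality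
  set u : ℕ → Ω → ℝ := fun k ω => φ (X ω) - T (X ω) (Θ k ω) with hu
  have huL2 : ∀ k, MemLp (u k) 2 μ := fun k => hφX_L2.sub (hfk k)
  have huint : ∀ j k, Integrable (fun ω => u j ω * u k ω) μ :=
    fun j k => l2_mul_integrable (huL2 j) (huL2 k)
  have hortho : ∀ j k, ∫ ω, u j ω * u k ω ∂μ = if j = k then A - P else 0 := by
    intro j k
    have e1 : (fun ω => u j ω * u k ω)
        = fun ω => (φ (X ω) * φ (X ω) - T (X ω) (Θ j ω) * φ (X ω))
          - (T (X ω) (Θ k ω) * φ (X ω) - T (X ω) (Θ j ω) * T (X ω) (Θ k ω)) := by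
      funext ω; simp only [hu]; ring
    have i1 : Integrable (fun ω => φ (X ω) * φ (X ω)) μ := l2_mul_integrable hφX_L2 hφX_L2
    have i2 : Integrable (fun ω => T (X ω) (Θ j ω) * φ (X ω)) μ :=
      l2_mul_integrable (hfk j) hφX_L2
    have i3 : Integrable (fun ω => T (X ω) (Θ k ω) * φ (X ω)) μ :=
      l2_mul_integrable (hfk k) hφX_L2
    have i4 : Integrable (fun ω => T (X ω) (Θ j ω) * T (X ω) (Θ k ω)) μ :=
      l2_mul_integrable (hfk j) (hfk k)
    have i12 : Integrable (fun ω => φ (X ω) * φ (X ω) - T (X ω) (Θ j ω) * φ (X ω)) μ :=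
      i1.sub i2
    have i34 : Integrable
        (fun ω => T (X ω) (Θ k ω) * φ (X ω) - T (X ω) (Θ j ω) * T (X ω) (Θ k ω)) μ := i3.sub i4
    rw [e1, integral_sub i12 i34, integral_sub i1 i2, integral_sub i3 i4,
      hI2, hI3 j, hI3 k]
    by_cases hjk : j = k
    · subst hjk; rw [hI1 j]; simp
    · rw [hI4 j k hjk]; simp [hjk]
  have hsq : ∀ B : ℕ,
      ∫ ω, (∑ k ∈ Finset.range B, u k ω) * (∑ k ∈ Finset.range B, u k ω) ∂μ
        = B * (A - P) := by
    intro B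
    have expand : (fun ω => (∑ k ∈ Finset.range B, u k ω) * (∑ k ∈ Finset.range B, u k ω))
        = fun ω => ∑ j ∈ Finset.range B, ∑ k ∈ Finset.range B, u j ω * u k ω := by
      funext ω; rw [Finset.sum_mul_sum]
    rw [expand, integral_finset_sum _ (fun j _ => integrable_finset_sum _ (fun k _ => huint j k))]
    have h1 : ∀ j ∈ Finset.range B, ∫ ω, ∑ k ∈ Finset.range B, u j ω * u k ω ∂μ
        = ∑ k ∈ Finset.range B, ∫ ω, u j ω * u k ω ∂μ :=
      fun j _ => integral_finset_sum _ (fun k _ => huint j k)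
    rw [Finset.sum_congr rfl h1]
    simp_rw [hortho]
    have h2 : ∀ j ∈ Finset.range B,
        (∑ k ∈ Finset.range B, if j = k then A - P else 0) = A - P := by
      intro j hj
      rw [Finset.sum_ite_eq]
      simp [hj]
    rw [Finset.sum_congr rfl h2, Finset.sum_const, Finset.card_range, nsmul_eq_mul]
  have hEB : ∀ B : ℕ, 1 ≤ B →
      ∫ ω, (φ (X ω) - (B:ℝ)⁻¹ * ∑ k ∈ Finset.range B, T (X ω) (Θ k ω))
        * (φ (X ω) - (B:ℝ)⁻¹ * ∑ k ∈ Finset.range B, T (X ω) (Θ k ω)) ∂μ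
      = (A - P) / B := by
    intro B hB
    have hBne : (B:ℝ) ≠ 0 := Nat.cast_ne_zero.mpr (by omega)
    have hid : ∀ ω, φ (X ω) - (B:ℝ)⁻¹ * ∑ k ∈ Finset.range B, T (X ω) (Θ k ω)
        = (B:ℝ)⁻¹ * ∑ k ∈ Finset.range B, u k ω := by
      intro ω
      simp only [hu]
      rw [Finset.sum_sub_distrib, Finset.sum_const, Finset.card_range, nsmul_eq_mul,
        mul_sub, ← mul_assoc, inv_mul_cancel₀ hBne, one_mul]
    simp_rw [hid]
    have hc2 : ∀ ω, ((B:ℝ)⁻¹ * ∑ k ∈ Finset.range B, u k ω)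
          * ((B:ℝ)⁻¹ * ∑ k ∈ Finset.range B, u k ω)
        = ((B:ℝ)⁻¹ * (B:ℝ)⁻¹)
          * ((∑ k ∈ Finset.range B, u k ω) * (∑ k ∈ Finset.range B, u k ω)) := fun ω => by ring
    simp_rw [hc2]
    rw [integral_const_mul, hsq B]
    field_simp
  -- pass to L² space
  set H : ℕ → Ω → ℝ := fun B ω => (B:ℝ)⁻¹ * ∑ k ∈ Finset.range B, T (X ω) (Θ k ω) with hHdef
  have hHL2 : ∀ B, MemLp (H B) 2 μ := by
    intro B
    have h := (memLp_finset_sum' (Finset.range B)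
      (fun k (_ : k ∈ Finset.range B) => hfk k)).const_mul ((B:ℝ)⁻¹)
    simp only [Finset.sum_apply] at h
    exact h
  have hYHL2 : ∀ B, MemLp (fun ω => Y ω - H B ω) 2 μ := fun B => hY.sub (hHL2 B)
  have hYφ : MemLp (fun ω => Y ω - φ (X ω)) 2 μ := hY.sub hφX_L2
  set fL : ℕ → Lp ℝ 2 μ := fun B => (hYHL2 B).toLp _ with hfLdef
  set uL : Lp ℝ 2 μ := hYφ.toLp _ with huLdef
  have hnorm_f : ∀ B, ‖fL B‖ ^ 2 = ∫ ω, (Y ω - H B ω) ^ 2 ∂μ := by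
    intro B
    rw [l2_norm_sq]
    refine integral_congr_ae ?_
    filter_upwards [(hYHL2 B).coeFn_toLp] with ω h
    rw [congrFun hfLdef B, h]
    ring
  have hnorm_u : ‖uL‖ ^ 2 = ∫ ω, (Y ω - φ (X ω)) ^ 2 ∂μ := by
    rw [l2_norm_sq]
    refine integral_congr_ae ?_
    filter_upwards [hYφ.coeFn_toLp] with ω h
    rw [huLdef, h]
    ring
  have hdiff : ∀ B : ℕ, 1 ≤ B → ‖fL B - uL‖ ^ 2 = (A - P) / B := by
    intro B hB
    rw [l2_norm_sq, ← hEB B hB]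
    refine integral_congr_ae ?_
    filter_upwards [Lp.coeFn_sub (fL B) uL, (hYHL2 B).coeFn_toLp, hYφ.coeFn_toLp]
      with ω h1 h2 h3
    rw [h1, congrFun hfLdef B, huLdef]
    simp only [Pi.sub_apply]
    rw [h2, h3]
    ring
  -- take limits
  have hc : Tendsto (fun B : ℕ => (A - P) / B) atTop (nhds 0) :=
    tendsto_const_div_atTop_nhds_zero_nat _
  have hsqrt : Tendsto (fun B : ℕ => Real.sqrt ((A - P) / B)) atTop (nhds 0) := by
    have h := (Real.continuous_sqrt.tendsto 0).comp hc
    simpa only [Real.sqrt_zero, Function.comp_def] using h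
  have hfu : Tendsto fL atTop (nhds uL) := by
    rw [tendsto_iff_norm_sub_tendsto_zero]
    refine Tendsto.congr' ?_ hsqrt
    filter_upwards [eventually_ge_atTop 1] with B hB
    rw [← hdiff B hB, Real.sqrt_sq (norm_nonneg _)]
  have hlim : Tendsto (fun B => ‖fL B‖ ^ 2) atTop (nhds (‖uL‖ ^ 2)) :=
    (hfu.norm).pow 2
  have hgoalfun : (fun B : ℕ =>
        ∫ ω, (Y ω - (B : ℝ)⁻¹ * ∑ k ∈ Finset.range B, T (X ω) (Θ k ω)) ^ 2 ∂μ)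
      = fun B => ‖fL B‖ ^ 2 := by
    funext B
    exact (hnorm_f B).symm
  have htarget : ∫ ω, (Y ω -
        (μ[fun ω' => T (X ω') (Θ 0 ω')|MeasurableSpace.comap X inferInstance]) ω) ^ 2 ∂μ
      = ‖uL‖ ^ 2 := by
    rw [hnorm_u]
    refine integral_congr_ae ?_
    filter_upwards [hg_ae] with ω h
    rw [← h]
  rw [hgoalfun, htarget]
  exact hlim
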